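/- Let a, b, λ ∈ ℝ with a ≠ 0 and b ≠ 0, and let g₀ : ℝ × ℝ → ℝ be an arbitrary function. For x ∈ ℝ and y > 0, set r (x, y) = x^2 + y^(2*a/b) (real power) and define g (x, y) = (r (x, y))^(λ/(2*a)) * g₀ ( x / (r (x, y))^(1/2), y / (r (x, y))^(b/(2*a)) ). Then for all t ∈ ℝ, all x ∈ ℝ and all y > 0, g (Real.exp (a*t) * x, Real.exp (b*t) * y) = Real.exp (λ*t) * g (x, y). That is, for every choice of the initial-data function g₀ on the initial set Σ, the function g is a Koopman eigenfunction, with the same eigenvalue λ, of the flow S_t(x,y) = (e^{at} x, e^{bt} y) of the diagonal linear field F(x,y) = (a x, b y); this exhibits an uncountable family of eigenfunctions for a single eigenvalue (nontrivial geometric multiplicity). (Appendix B, Example 2 of the paper.) -/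

import Mathlib

/-- Appendix B, Example 2 of the paper: for every choice of initial data g₀, the function
g obtained by the method of characteristics is a Koopman eigenfunction with eigenvalue λ
of the flow S_t(x,y) = (e^{at} x, e^{bt} y) of the diagonal linear field F(x,y) = (ax, by);
this exhibits nontrivial geometric multiplicity. -/
theorem diagonal_linear_koopman_eigenfunction_family
    (a b lam : ℝ) (ha : a ≠ 0) (hb : b ≠ 0)
    (g₀ : ℝ × ℝ → ℝ) (r g : ℝ → ℝ → ℝ)
    (hr : ∀ x y : ℝ, r x y = x^2 + y^(2*a/b))
    (hg : ∀ x y : ℝ, g x y = (r x y)^(lam/(2*a)) *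
      g₀ (x / (r x y)^((1:ℝ)/2), y / (r x y)^(b/(2*a)))) :
    ∀ (t x y : ℝ), 0 < y →
      g (Real.exp (a*t) * x) (Real.exp (b*t) * y) = Real.exp (lam*t) * g x y := by
  intro t x y hy
  have hrpos : 0 < r x y := by
    rw [hr]
    have := Real.rpow_pos_of_pos hy (2*a/b)
    positivity
  have hexp : ∀ s c : ℝ, Real.exp s ^ c = Real.exp (s * c) := by
    intro s c
    rw [Real.rpow_def_of_pos (Real.exp_pos s), Real.log_exp]
  have hrr : r (Real.exp (a*t) * x) (Real.exp (b*t) * y) = Real.exp (2*a*t) * r x y := by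
    rw [hr, hr]
    rw [Real.mul_rpow (Real.exp_pos _).le hy.le, hexp]
    have h1 : b * t * (2*a/b) = 2*a*t := by field_simp
    rw [h1]
    have h2 : (Real.exp (a*t) * x)^2 = Real.exp (2*a*t) * x^2 := by
      rw [mul_pow, ← Real.exp_nat_mul]; ring_nf
    rw [h2, mul_add]
  rw [hg, hg, hrr]
  rw [Real.mul_rpow (Real.exp_pos _).le hrpos.le, hexp,
      Real.mul_rpow (Real.exp_pos _).le hrpos.le, hexp,
      Real.mul_rpow (Real.exp_pos _).le hrpos.le, hexp]
  have e1 : 2*a*t * (lam/(2*a)) = lam * t := by field_simp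
  have e2 : 2*a*t * ((1:ℝ)/2) = a*t := by ring
  have e3 : 2*a*t * (b/(2*a)) = b*t := by field_simp
  rw [e1, e2, e3]
  rw [mul_div_mul_left _ _ (Real.exp_ne_zero (a*t)),
      mul_div_mul_left _ _ (Real.exp_ne_zero (b*t))]
  ring
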